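/- Let p ∈ (1,∞). There exist constants c, C > 0 depending only on p such that for all δ ≥ 0, all a ≥ 0, and all t > 0 with δ + a + t > 0, c·(δ+a+t)^{p-2} t² ≤ φ_a(t) ≤ C·(δ+a+t)^{p-2} t², where φ_a is the shifted N-function of φ = φ_{p,δ}. -/

import Mathlib

noncomputable section

open Real MeasureTheory intervalIntegral Set

/-- If `0 < x ≤ y ≤ 2x` then `y^z ≤ 2^|z| * x^z`. -/
lemma aux_rpow_le₁ {x y z : ℝ} (hx : 0 < x) (hxy : x ≤ y) (h2 : y ≤ 2 * x) :
    y ^ z ≤ 2 ^ |z| * x ^ z := by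
  have hK1 : (1:ℝ) ≤ 2 ^ |z| := by
    calc (1:ℝ) = 2 ^ (0:ℝ) := by rw [Real.rpow_zero]
    _ ≤ 2 ^ |z| := Real.rpow_le_rpow_of_exponent_le one_le_two (abs_nonneg z)
  rcases le_or_gt 0 z with hz | hz
  · calc y ^ z ≤ (2 * x) ^ z := Real.rpow_le_rpow (hx.le.trans hxy) h2 hz
      _ = 2 ^ z * x ^ z := Real.mul_rpow (by norm_num) hx.le
      _ ≤ 2 ^ |z| * x ^ z := by
          have := Real.rpow_le_rpow_of_exponent_le (x := (2:ℝ)) one_le_two (le_abs_self z)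
          exact mul_le_mul_of_nonneg_right this (Real.rpow_nonneg hx.le z)
  · calc y ^ z ≤ x ^ z := Real.rpow_le_rpow_of_nonpos hx hxy hz.le
      _ ≤ 2 ^ |z| * x ^ z := le_mul_of_one_le_left (Real.rpow_nonneg hx.le z) hK1

/-- If `0 < x ≤ y ≤ 2x` then `x^z ≤ 2^|z| * y^z`. -/
lemma aux_rpow_le₂ {x y z : ℝ} (hx : 0 < x) (hxy : x ≤ y) (h2 : y ≤ 2 * x) :
    x ^ z ≤ 2 ^ |z| * y ^ z := by
  have hy : 0 < y := hx.trans_le hxy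
  have hK1 : (1:ℝ) ≤ 2 ^ |z| := by
    calc (1:ℝ) = 2 ^ (0:ℝ) := by rw [Real.rpow_zero]
    _ ≤ 2 ^ |z| := Real.rpow_le_rpow_of_exponent_le one_le_two (abs_nonneg z)
  rcases le_or_gt 0 z with hz | hz
  · calc x ^ z ≤ y ^ z := Real.rpow_le_rpow hx.le hxy hz
      _ ≤ 2 ^ |z| * y ^ z := le_mul_of_one_le_left (Real.rpow_nonneg hy.le z) hK1
  · calc x ^ z ≤ (y / 2) ^ z := by
          apply Real.rpow_le_rpow_of_nonpos (by linarith) (by linarith) hz.le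
      _ = y ^ z / 2 ^ z := Real.div_rpow hy.le (by norm_num : (0:ℝ) ≤ 2) z
      _ = 2 ^ (-z) * y ^ z := by
          rw [Real.rpow_neg (by norm_num)]
          ring
      _ ≤ 2 ^ |z| * y ^ z := by
          have := Real.rpow_le_rpow_of_exponent_le (x := (2:ℝ)) one_le_two (neg_le_abs z)
          exact mul_le_mul_of_nonneg_right this (Real.rpow_nonneg hy.le z)

/-- Integrability of `s ↦ (b+s)^(p-1)` on nonnegative intervals. -/
lemma aux_integrable_pow1 (p b u v : ℝ) (hp : 1 < p) :
    IntervalIntegrable (fun s => (b + s) ^ (p - 1)) volume u v := by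
  have h := (intervalIntegral.intervalIntegrable_rpow' (a := b + u) (b := b + v)
      (r := p - 1) (by linarith)).comp_add_left b
  simpa using h

/-- Integrability of `s ↦ (b+s)^(p-2) * s` on nonnegative intervals. -/
lemma aux_integrable (p b u v : ℝ) (hp : 1 < p) (hb : 0 ≤ b) (hu : 0 ≤ u) (hv : 0 ≤ v) :
    IntervalIntegrable (fun s => (b + s) ^ (p - 2) * s) volume u v := by
  have h1 : IntervalIntegrable (fun s => (b + s) ^ (p - 1)) volume u v :=
    aux_integrable_pow1 p b u v hp
  have h2 : IntervalIntegrable (fun s => b * (b + s) ^ (p - 2)) volume u v := by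
    rcases eq_or_lt_of_le hb with h | h
    · simp [← h]
    · apply ContinuousOn.intervalIntegrable
      apply ContinuousOn.mul continuousOn_const
      apply ContinuousOn.rpow_const (by fun_prop)
      intro x hx
      left
      have : min u v ≤ x := hx.1
      have : 0 ≤ x := le_trans (le_min hu hv) this
      positivity
  apply (h1.sub h2).congr
  intro s hs
  show (b + s) ^ (p - 1) - b * (b + s) ^ (p - 2) = (b + s) ^ (p - 2) * s
  have hs0 : 0 < s := lt_of_le_of_lt (le_min hu hv) hs.1
  have hbs : b + s ≠ 0 := by positivity
  have : (b + s) ^ (p - 1) = (b + s) ^ (p - 2) * (b + s) := by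
    rw [show p - 1 = (p - 2) + 1 by ring, Real.rpow_add_one hbs]
  rw [this]
  ring

/-- The N-function `φ_{p,δ}(t) = ∫₀ᵗ (δ+s)^{p-2} s ds`. -/
def phi (p δ t : ℝ) : ℝ := ∫ s in (0:ℝ)..t, (δ + s) ^ (p - 2) * s

/-- Its first derivative `φ'(t) = (δ+t)^{p-2} t`. -/
def phi' (p δ t : ℝ) : ℝ := (δ + t) ^ (p - 2) * t

/-- The shifted N-function `φ_a(t) = ∫₀ᵗ φ'(a+s)·s/(a+s) ds`. -/
def phiShift (p δ a t : ℝ) : ℝ := ∫ s in (0:ℝ)..t, phi' p δ (a + s) * s / (a + s)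

/-- For `p ∈ (1,∞)` there are constants `c, C > 0`, depending only on `p`, such that
`c·(δ+a+t)^{p-2} t² ≤ φ_a(t) ≤ C·(δ+a+t)^{p-2} t²` for all `δ ≥ 0`, `a ≥ 0` and all
`t > 0` with `δ + a + t > 0`. -/
theorem phiShift_equiv_shifted_power (p : ℝ) (hp : 1 < p) :
    ∃ c C : ℝ, 0 < c ∧ 0 < C ∧ ∀ δ : ℝ, 0 ≤ δ → ∀ a : ℝ, 0 ≤ a → ∀ t : ℝ, 0 < t →
      0 < δ + a + t →
      c * ((δ + a + t) ^ (p - 2) * t ^ 2) ≤ phiShift p δ a t ∧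
      phiShift p δ a t ≤ C * ((δ + a + t) ^ (p - 2) * t ^ 2) := by
  set K : ℝ := 2 ^ |p - 2| with hKdef
  have hK0 : 0 < K := Real.rpow_pos_of_pos (by norm_num) _
  have hK1 : (1:ℝ) ≤ K := by
    calc (1:ℝ) = 2 ^ (0:ℝ) := by rw [Real.rpow_zero]
    _ ≤ K := Real.rpow_le_rpow_of_exponent_le one_le_two (abs_nonneg _)
  have hp0 : 0 < p := by linarith
  refine ⟨3 / 8 * K⁻¹, K * (4 / p + 1), by positivity, by positivity, ?_⟩
  intro δ hδ a ha t ht hbt'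
  set b : ℝ := δ + a with hbdef
  have hb : 0 ≤ b := by positivity
  have hbt : 0 < b + t := by simpa [hbdef, add_assoc] using hbt'
  have hA : 0 ≤ (b + t) ^ (p - 2) := Real.rpow_nonneg hbt.le _
  -- rewrite phiShift as an integral of `(b+s)^(p-2) * s`
  have hphi : phiShift p δ a t = ∫ s in (0:ℝ)..t, (b + s) ^ (p - 2) * s := by
    unfold phiShift phi'
    apply intervalIntegral.integral_congr
    intro s hs
    rw [Set.uIcc_of_le ht.le] at hs
    obtain ⟨hs0, hst⟩ := hs
    rcases eq_or_lt_of_le (by positivity : (0:ℝ) ≤ a + s) with h | h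
    · have hs' : s = 0 := by linarith [ha, hs0]
      simp [← h, hs']
    · have hne : a + s ≠ 0 := h.ne'
      show (δ + (a + s)) ^ (p - 2) * (a + s) * s / (a + s) = (b + s) ^ (p - 2) * s
      rw [show δ + (a + s) = b + s by rw [hbdef]; ring]
      field_simp
  rw [hphi]
  have hint3 : IntervalIntegrable (fun s => (b + s) ^ (p - 2) * s) volume 0 t :=
    aux_integrable p b 0 t hp hb le_rfl ht.le
  constructor
  · -- lower bound
    have hint1 : IntervalIntegrable (fun s => (b + s) ^ (p - 2) * s) volume 0 (t / 2) :=
      aux_integrable p b 0 (t / 2) hp hb le_rfl (by linarith)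
    have hint2 : IntervalIntegrable (fun s => (b + s) ^ (p - 2) * s) volume (t / 2) t :=
      aux_integrable p b (t / 2) t hp hb (by linarith) ht.le
    have hsplit := intervalIntegral.integral_add_adjacent_intervals hint1 hint2
    have h1 : 0 ≤ ∫ s in (0:ℝ)..(t / 2), (b + s) ^ (p - 2) * s := by
      apply intervalIntegral.integral_nonneg (by linarith)
      intro s hs
      have : 0 ≤ b + s := by have := hs.1; positivity
      have := hs.1
      positivity
    have h2 : (∫ s in (t / 2)..t, K⁻¹ * (b + t) ^ (p - 2) * s) ≤
        ∫ s in (t / 2)..t, (b + s) ^ (p - 2) * s := by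
      refine intervalIntegral.integral_mono_on (by linarith) ?_ hint2 ?_
      · exact (continuous_const.mul continuous_id).intervalIntegrable _ _
      · intro s hs
        obtain ⟨hs1, hs2⟩ := hs
        have hs0 : 0 < s := by linarith
        have hbs : 0 < b + s := by linarith
        have key : (b + t) ^ (p - 2) ≤ K * (b + s) ^ (p - 2) :=
          aux_rpow_le₁ hbs (by linarith) (by linarith)
        have : K⁻¹ * (b + t) ^ (p - 2) ≤ (b + s) ^ (p - 2) := by
          rw [inv_mul_le_iff₀ hK0]
          exact key
        exact mul_le_mul_of_nonneg_right this hs0.le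
    have h3 : (∫ s in (t / 2)..t, K⁻¹ * (b + t) ^ (p - 2) * s) =
        K⁻¹ * (b + t) ^ (p - 2) * (3 / 8 * t ^ 2) := by
      rw [intervalIntegral.integral_const_mul, integral_id]
      ring
    calc 3 / 8 * K⁻¹ * ((b + t) ^ (p - 2) * t ^ 2)
        = K⁻¹ * (b + t) ^ (p - 2) * (3 / 8 * t ^ 2) := by ring
      _ ≤ ∫ s in (t / 2)..t, (b + s) ^ (p - 2) * s := h3 ▸ h2
      _ ≤ ∫ s in (0:ℝ)..t, (b + s) ^ (p - 2) * s := by linarith [hsplit]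
  · -- upper bound
    by_cases hcase : 2 ≤ p ∨ t ≤ b
    · -- pointwise comparison case
      have hpt : ∀ s ∈ Set.Icc (0:ℝ) t, (b + s) ^ (p - 2) * s ≤ K * (b + t) ^ (p - 2) * s := by
        intro s hs
        obtain ⟨hs0, hst⟩ := hs
        rcases eq_or_lt_of_le hs0 with h0 | h0
        · rw [← h0]; simp
        have key : (b + s) ^ (p - 2) ≤ K * (b + t) ^ (p - 2) := by
          rcases hcase with h | h
          · calc (b + s) ^ (p - 2) ≤ (b + t) ^ (p - 2) :=
                  Real.rpow_le_rpow (by positivity) (by linarith) (by linarith)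
              _ ≤ K * (b + t) ^ (p - 2) := le_mul_of_one_le_left hA hK1
          · exact aux_rpow_le₂ (by linarith) (by linarith) (by linarith)
        exact mul_le_mul_of_nonneg_right key h0.le
      have h5 : (∫ s in (0:ℝ)..t, (b + s) ^ (p - 2) * s) ≤
          ∫ s in (0:ℝ)..t, K * (b + t) ^ (p - 2) * s :=
        intervalIntegral.integral_mono_on ht.le hint3
          ((continuous_const.mul continuous_id).intervalIntegrable _ _) hpt
      have h6 : (∫ s in (0:ℝ)..t, K * (b + t) ^ (p - 2) * s) =
          K * (b + t) ^ (p - 2) * (t ^ 2 / 2) := by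
        rw [intervalIntegral.integral_const_mul, integral_id]
        ring
      have hC : K * (b + t) ^ (p - 2) * (t ^ 2 / 2) ≤
          K * (4 / p + 1) * ((b + t) ^ (p - 2) * t ^ 2) := by
        have h1 : K * (1 / 2) ≤ K * (4 / p + 1) := by
          apply mul_le_mul_of_nonneg_left _ hK0.le
          have : 0 < 4 / p := by positivity
          linarith
        calc K * (b + t) ^ (p - 2) * (t ^ 2 / 2) = K * (1 / 2) * ((b + t) ^ (p - 2) * t ^ 2) := by
              ring
          _ ≤ K * (4 / p + 1) * ((b + t) ^ (p - 2) * t ^ 2) := by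
              apply mul_le_mul_of_nonneg_right h1 (by positivity)
      linarith [h5, h6 ▸ h5]
    · push_neg at hcase
      obtain ⟨hp2, hbtlt⟩ := hcase
      have h4 : ∀ s ∈ Set.Icc (0:ℝ) t, (b + s) ^ (p - 2) * s ≤ (b + s) ^ (p - 1) := by
        intro s hs
        obtain ⟨hs0, hst⟩ := hs
        rcases eq_or_lt_of_le (by positivity : (0:ℝ) ≤ b + s) with h | h
        · rw [← h]
          rw [Real.zero_rpow (by linarith : p - 1 ≠ 0)]
          nlinarith [Real.rpow_nonneg (le_refl (0:ℝ)) (p - 2)]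
        · have : (b + s) ^ (p - 1) = (b + s) ^ (p - 2) * (b + s) := by
            rw [show p - 1 = (p - 2) + 1 by ring, Real.rpow_add_one h.ne']
          rw [this]
          apply mul_le_mul_of_nonneg_left (by linarith) (Real.rpow_nonneg h.le _)
      have h5 : (∫ s in (0:ℝ)..t, (b + s) ^ (p - 2) * s) ≤
          ∫ s in (0:ℝ)..t, (b + s) ^ (p - 1) :=
        intervalIntegral.integral_mono_on ht.le hint3 (aux_integrable_pow1 p b 0 t hp) h4
      have h6 : (∫ s in (0:ℝ)..t, (b + s) ^ (p - 1)) = ((b + t) ^ p - b ^ p) / p := by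
        rw [intervalIntegral.integral_comp_add_left (fun x => x ^ (p - 1)) b]
        rw [integral_rpow (Or.inl (by linarith : (-1:ℝ) < p - 1))]
        rw [show p - 1 + 1 = p by ring, add_zero]
      have h7 : ((b + t) ^ p - b ^ p) / p ≤ (b + t) ^ p / p := by
        gcongr
        linarith [Real.rpow_nonneg hb p]
      have h8 : (b + t) ^ p = (b + t) ^ (p - 2) * (b + t) ^ 2 := by
        rw [← Real.rpow_natCast (b + t) 2, ← Real.rpow_add hbt]
        norm_num
      have h10 : (b + t) ^ p / p ≤ K * (4 / p + 1) * ((b + t) ^ (p - 2) * t ^ 2) := by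
        rw [h8]
        have h9 : (b + t) ^ 2 ≤ 4 * t ^ 2 := by nlinarith
        have step1 : (b + t) ^ (p - 2) * (b + t) ^ 2 / p ≤
            (b + t) ^ (p - 2) * (4 * t ^ 2) / p := by
          gcongr
        have hfrac : 4 / p ≤ K * (4 / p + 1) := by
          have h4p : 0 < 4 / p := by positivity
          nlinarith
        have step2 : (b + t) ^ (p - 2) * (4 * t ^ 2) / p ≤
            K * (4 / p + 1) * ((b + t) ^ (p - 2) * t ^ 2) := by
          calc (b + t) ^ (p - 2) * (4 * t ^ 2) / p = 4 / p * ((b + t) ^ (p - 2) * t ^ 2) := by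
                ring
            _ ≤ K * (4 / p + 1) * ((b + t) ^ (p - 2) * t ^ 2) :=
                mul_le_mul_of_nonneg_right hfrac (by positivity)
        linarith
      rw [h6] at h5
      linarith
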